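/- For real s, t with |s| + |t| < 2, the second partial derivative of ent with respect to t is ent_tt(s,t) = -π/(32·sin(π(p_a+p_b))·sin(πp_a)·sin(πp_b)) · ( sin^2(πs/2) + (cos(πs/2)+cos(πt/2))^2/2 ), which is strictly negative except at the four points (s,t) = (±2,0), (0,±2). -/

import Mathlib

open Real

/-- The asymptotic probability `p_a` of an `a`-edge, for tilt `(s, t)`. -/
noncomputable def pA (s t : ℝ) : ℝ :=
  t / 4 + (1 / (2 * π)) * arccos ((cos (π * t / 2) - cos (π * s / 2)) / 2)

/-- The asymptotic probability `p_b` of a `b`-edge, for tilt `(s, t)`. -/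
noncomputable def pB (s t : ℝ) : ℝ :=
  -t / 4 + (1 / (2 * π)) * arccos ((cos (π * t / 2) - cos (π * s / 2)) / 2)

/-- The asymptotic probability `p_c` of a `c`-edge, for tilt `(s, t)`. -/
noncomputable def pC (s t : ℝ) : ℝ :=
  -s / 4 + (1 / (2 * π)) * arccos ((cos (π * s / 2) - cos (π * t / 2)) / 2)

/-- The asymptotic probability `p_d` of a `d`-edge, for tilt `(s, t)`. -/
noncomputable def pD (s t : ℝ) : ℝ :=
  s / 4 + (1 / (2 * π)) * arccos ((cos (π * s / 2) - cos (π * t / 2)) / 2)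

/-- The Lobachevsky function `L(z) = -∫₀^z log|2 sin u| du`. -/
noncomputable def Lob (z : ℝ) : ℝ := -∫ u in (0 : ℝ)..z, Real.log |2 * Real.sin u|

/-- The local entropy as a function of the tilt `(s, t)`:
`ent(s,t) = (1/π)(L(πp_a) + L(πp_b) + L(πp_c) + L(πp_d))`. -/
noncomputable def ent (s t : ℝ) : ℝ :=
  (1 / π) * (Lob (π * pA s t) + Lob (π * pB s t) +
    Lob (π * pC s t) + Lob (π * pD s t))


open MeasureTheory

lemma neg_log_le (u : ℝ) (hu : 0 < u) : -Real.log u ≤ 2 * u ^ (-(1/2) : ℝ) := by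
  have h1 : Real.log (u ^ (-(1/2):ℝ)) ≤ u ^ (-(1/2):ℝ) - 1 := Real.log_le_sub_one_of_pos (Real.rpow_pos_of_pos hu _)
  have h2 : Real.log (u ^ (-(1/2):ℝ)) = (-(1/2)) * Real.log u := Real.log_rpow hu _
  nlinarith [Real.rpow_pos_of_pos hu (-(1/2):ℝ)]

lemma II_log_sin {z : ℝ} (hz0 : 0 < z) (hzpi : z < π) :
    IntervalIntegrable (fun u => Real.log |2 * Real.sin u|) volume 0 z := by
  have hmeas : Measurable fun u : ℝ => Real.log |2 * Real.sin u| :=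
    Real.measurable_log.comp ((continuous_abs.comp (continuous_const.mul continuous_sin)).measurable)
  set c := min z (π/2) with hc
  have hc0 : 0 < c := lt_min hz0 (by positivity)
  have hcz : c ≤ z := min_le_left _ _
  have hchalf : c ≤ π / 2 := min_le_right _ _
  have h1 : IntervalIntegrable (fun u => Real.log |2 * Real.sin u|) volume 0 c := by
    have hg : IntervalIntegrable (fun u : ℝ => Real.log 2 + Real.log (π/2) + 2 * u ^ (-(1/2):ℝ)) volume 0 c :=
      (intervalIntegrable_const.add ((intervalIntegral.intervalIntegrable_rpow' (by norm_num)).const_mul 2))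
    refine hg.mono_fun hmeas.aestronglyMeasurable ?_
    rw [Filter.EventuallyLE, ae_restrict_iff' measurableSet_uIoc]
    refine Filter.Eventually.of_forall (fun u hu => ?_)
    rw [Set.uIoc_of_le (le_of_lt hc0)] at hu
    obtain ⟨hu0, huc⟩ := hu
    have hupi2 : u ≤ π / 2 := le_trans huc hchalf
    have hsinpos : 0 < Real.sin u := Real.sin_pos_of_pos_of_lt_pi hu0 (lt_of_le_of_lt hupi2 (by linarith [Real.pi_pos]))
    have hsinle : Real.sin u ≤ 1 := Real.sin_le_one u
    have hjordan : 2 / π * u ≤ Real.sin u := Real.mul_le_sin (le_of_lt hu0) hupi2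
    have habs : |2 * Real.sin u| = 2 * Real.sin u := abs_of_pos (by linarith)
    have hlog : Real.log |2 * Real.sin u| = Real.log 2 + Real.log (Real.sin u) := by
      rw [habs, Real.log_mul (by norm_num) (ne_of_gt hsinpos)]
    have hlogsin_le : Real.log (Real.sin u) ≤ 0 := Real.log_nonpos (le_of_lt hsinpos) hsinle
    have hlogsin_ge : Real.log (2/π * u) ≤ Real.log (Real.sin u) :=
      Real.log_le_log (by positivity) hjordan
    have hsplit : Real.log (2/π*u) = Real.log 2 - Real.log π + Real.log u := by
      rw [Real.log_mul (by positivity) (ne_of_gt hu0), Real.log_div (by norm_num) (ne_of_gt Real.pi_pos)]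
    have hneglog : -Real.log u ≤ 2 * u ^ (-(1/2):ℝ) := neg_log_le u hu0
    have hlogpi : Real.log π ≤ Real.log 2 + Real.log (π/2) + Real.log 2 := by
      have : Real.log π = Real.log 2 + Real.log (π/2) := by
        rw [← Real.log_mul (by norm_num) (by positivity)]; congr 1; ring
      have h2 : (0:ℝ) ≤ Real.log 2 := Real.log_nonneg (by norm_num)
      linarith
    have hrpos : (0:ℝ) < u ^ (-(1/2):ℝ) := Real.rpow_pos_of_pos hu0 _
    simp only [Real.norm_eq_abs]
    rw [abs_le]
    constructor
    · have : |Real.log 2 + Real.log (π/2) + 2 * u ^ (-(1/2):ℝ)| = Real.log 2 + Real.log (π/2) + 2 * u ^ (-(1/2):ℝ) := by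
        have h2 : (0:ℝ) ≤ Real.log 2 := Real.log_nonneg (by norm_num)
        have h3 : (0:ℝ) ≤ Real.log (π/2) := Real.log_nonneg (by linarith [Real.pi_gt_three])
        apply abs_of_nonneg; positivity
      rw [this, hlog]
      have h2 : (0:ℝ) ≤ Real.log 2 := Real.log_nonneg (by norm_num)
      linarith
    · have h2 : (0:ℝ) ≤ Real.log 2 := Real.log_nonneg (by norm_num)
      have h3 : (0:ℝ) ≤ Real.log (π/2) := Real.log_nonneg (by linarith [Real.pi_gt_three])
      have : Real.log 2 + Real.log (π/2) + 2 * u ^ (-(1/2):ℝ) ≤ |Real.log 2 + Real.log (π/2) + 2 * u ^ (-(1/2):ℝ)| := le_abs_self _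
      rw [hlog]
      linarith
  have h2 : IntervalIntegrable (fun u => Real.log |2 * Real.sin u|) volume c z := by
    apply ContinuousOn.intervalIntegrable
    intro u hu
    rw [Set.uIcc_of_le hcz] at hu
    have hsinpos : 0 < Real.sin u := Real.sin_pos_of_pos_of_lt_pi (lt_of_lt_of_le hc0 hu.1) (lt_of_le_of_lt hu.2 hzpi)
    exact ((continuous_abs.comp (continuous_const.mul continuous_sin)).continuousAt.log (by simp [abs_ne_zero]; intro h; simp [h] at hsinpos)).continuousWithinAt
  exact h1.trans h2

lemma lob_hasDerivAt {z : ℝ} (hz0 : 0 < z) (hzpi : z < π) :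
    HasDerivAt (fun z => -∫ u in (0:ℝ)..z, Real.log |2 * Real.sin u|) (-Real.log (2 * Real.sin z)) z := by
  have hsin : 0 < Real.sin z := Real.sin_pos_of_pos_of_lt_pi hz0 hzpi
  have hmeas : Measurable fun u : ℝ => Real.log |2 * Real.sin u| :=
    Real.measurable_log.comp ((continuous_abs.comp (continuous_const.mul continuous_sin)).measurable)
  have hca : ContinuousAt (fun u => Real.log |2 * Real.sin u|) z :=
    (continuous_abs.comp (continuous_const.mul continuous_sin)).continuousAt.log (by simp [abs_ne_zero]; intro h; simp [h] at hsin)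
  have := (intervalIntegral.integral_hasDerivAt_right (II_log_sin hz0 hzpi)
    hmeas.stronglyMeasurable.stronglyMeasurableAtFilter hca).neg
  rw [abs_of_pos (by linarith : (0:ℝ) < 2 * Real.sin z)] at this
  exact this

lemma lob_hasDerivAt' {z : ℝ} (hz0 : 0 < z) (hzpi : z < π) :
    HasDerivAt Lob (-Real.log (2 * Real.sin z)) z :=
  lob_hasDerivAt hz0 hzpi

lemma cos_half_abs (a : ℝ) : cos (π * a / 2) = cos (π * |a| / 2) := by
  rw [← Real.cos_abs (π * a / 2)]
  congr 1
  rw [abs_div, abs_mul, abs_of_nonneg Real.pi_pos.le, abs_of_nonneg (by norm_num : (0:ℝ) ≤ 2)]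

-- cs + ct > 0
lemma cs_ct_pos {s t : ℝ} (h : |s| + |t| < 2) :
    0 < cos (π * s / 2) + cos (π * t / 2) := by
  have hs2 : |s| < 2 := by have := abs_nonneg t; linarith
  have ht2 : |t| < 2 := by have := abs_nonneg s; linarith
  have hpi := Real.pi_pos
  have hmono := Real.strictAntiOn_cos
    (Set.mem_Icc.2 ⟨by positivity, by nlinarith [abs_nonneg s, abs_nonneg t]⟩)
    (Set.mem_Icc.2 ⟨(by nlinarith [abs_nonneg t] : (0:ℝ) ≤ π - π * |t| / 2),
      by nlinarith [abs_nonneg t]⟩)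
    (show π * |s| / 2 < π - π * |t| / 2 by nlinarith [abs_nonneg s, abs_nonneg t])
  rw [Real.cos_pi_sub] at hmono
  rw [cos_half_abs s, cos_half_abs t]; linarith

lemma X_bounds {s t : ℝ} (h : |s| + |t| < 2) :
    -1 < (cos (π * t / 2) - cos (π * s / 2)) / 2 ∧
    (cos (π * t / 2) - cos (π * s / 2)) / 2 < 1 := by
  have h1 := cs_ct_pos h
  have h2 := Real.cos_le_one (π * s / 2)
  have h3 := Real.cos_le_one (π * t / 2)
  constructor <;> nlinarith

-- arccos X > π|t|/2
lemma arccos_gt {s t : ℝ} (h : |s| + |t| < 2) :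
    π * |t| / 2 < arccos ((cos (π * t / 2) - cos (π * s / 2)) / 2) := by
  have hpi := Real.pi_pos
  have ht2 : |t| < 2 := lt_of_le_of_lt (le_add_of_nonneg_left (abs_nonneg s)) h
  have h1 := cs_ct_pos h
  have hX := X_bounds h
  have hct : cos (π * t / 2) = cos (π * |t| / 2) := cos_half_abs t
  have hXlt : (cos (π * t / 2) - cos (π * s / 2)) / 2 < cos (π * |t| / 2) := by
    rw [← hct]; nlinarith
  have hmem1 : cos (π * |t| / 2) ∈ Set.Icc (-1 : ℝ) 1 :=
    ⟨Real.neg_one_le_cos _, Real.cos_le_one _⟩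
  have hmem2 : (cos (π * t / 2) - cos (π * s / 2)) / 2 ∈ Set.Icc (-1 : ℝ) 1 :=
    ⟨le_of_lt hX.1, le_of_lt hX.2⟩
  have := Real.strictAntiOn_arccos hmem2 hmem1 hXlt
  rwa [Real.arccos_cos (by positivity) (by nlinarith [abs_nonneg t])] at this

lemma arccos_lt_pi' {s t : ℝ} (h : |s| + |t| < 2) :
    arccos ((cos (π * t / 2) - cos (π * s / 2)) / 2) < π := by
  have hX := X_bounds h
  have := Real.arccos_le_pi ((cos (π * t / 2) - cos (π * s / 2)) / 2)
  rcases lt_or_eq_of_le this with h1 | h1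
  · exact h1
  · exfalso
    have := Real.cos_arccos (le_of_lt hX.1) (le_of_lt hX.2)
    rw [h1, Real.cos_pi] at this
    linarith [hX.1]

lemma pA_pi (s t : ℝ) : π * pA s t =
    π * t / 4 + arccos ((cos (π * t / 2) - cos (π * s / 2)) / 2) / 2 := by
  have := Real.pi_ne_zero; unfold pA; field_simp

lemma pB_pi (s t : ℝ) : π * pB s t =
    -(π * t) / 4 + arccos ((cos (π * t / 2) - cos (π * s / 2)) / 2) / 2 := by
  have := Real.pi_ne_zero; unfold pB; field_simp

lemma pC_eq (s t : ℝ) : pC s t = pB t s := rfl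
lemma pD_eq (s t : ℝ) : pD s t = pA t s := rfl

lemma pA_mem {s t : ℝ} (h : |s| + |t| < 2) : π * pA s t ∈ Set.Ioo 0 π := by
  have hpi := Real.pi_pos
  have ht2 : |t| < 2 := lt_of_le_of_lt (le_add_of_nonneg_left (abs_nonneg s)) h
  have h1 := arccos_gt h
  have h2 := arccos_lt_pi' h
  rw [pA_pi]
  constructor
  · have : π * t / 4 ≥ -(π * |t| / 4) := by
      rcases abs_cases t with ⟨h3, _⟩ | ⟨h3, _⟩ <;> nlinarith
    nlinarith
  · have : π * t / 4 ≤ π * |t| / 4 := by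
      rcases abs_cases t with ⟨h3, _⟩ | ⟨h3, _⟩ <;> nlinarith
    nlinarith

lemma pB_mem {s t : ℝ} (h : |s| + |t| < 2) : π * pB s t ∈ Set.Ioo 0 π := by
  have hpi := Real.pi_pos
  have ht2 : |t| < 2 := lt_of_le_of_lt (le_add_of_nonneg_left (abs_nonneg s)) h
  have h1 := arccos_gt h
  have h2 := arccos_lt_pi' h
  rw [pB_pi]
  constructor
  · have : -(π * t) / 4 ≥ -(π * |t| / 4) := by
      rcases abs_cases t with ⟨h3, _⟩ | ⟨h3, _⟩ <;> nlinarith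
    nlinarith
  · have : -(π * t) / 4 ≤ π * |t| / 4 := by
      rcases abs_cases t with ⟨h3, _⟩ | ⟨h3, _⟩ <;> nlinarith
    nlinarith

lemma prod_eq {s t : ℝ} (h : |s| + |t| < 2) :
    sin (π * pA s t) * sin (π * pB s t) =
      (cos (π * t / 2) + cos (π * s / 2)) / 4 := by
  have hX := X_bounds h
  have hc := Real.cos_sub_cos (π * t / 2) (arccos ((cos (π * t / 2) - cos (π * s / 2)) / 2))
  have hca := Real.cos_arccos (le_of_lt hX.1) (le_of_lt hX.2)
  rw [hca] at hc
  have e1 : (π * t / 2 + arccos ((cos (π * t / 2) - cos (π * s / 2)) / 2)) / 2 = π * pA s t := by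
    rw [pA_pi]; ring
  have e2 : (π * t / 2 - arccos ((cos (π * t / 2) - cos (π * s / 2)) / 2)) / 2 = -(π * pB s t) := by
    rw [pB_pi]; ring
  rw [e1, e2, Real.sin_neg] at hc
  linarith

-- derivative of the inner X as a function of t
lemma X_hasDerivAt (s t : ℝ) :
    HasDerivAt (fun t' => (cos (π * t' / 2) - cos (π * s / 2)) / 2)
      (-(π / 4) * sin (π * t / 2)) t := by
  have h1 : HasDerivAt (fun t' : ℝ => π * t' / 2) (π / 2) t := by
    simpa using (((hasDerivAt_id t).const_mul π).div_const 2)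
  have h2 := ((Real.hasDerivAt_cos (π * t / 2)).comp t h1).sub_const (cos (π * s / 2))
  have h3 := h2.div_const 2
  refine h3.congr_deriv (Eq.symm ?_)
  ring

lemma Y_hasDerivAt (s t : ℝ) :
    HasDerivAt (fun t' => (cos (π * s / 2) - cos (π * t' / 2)) / 2)
      ((π / 4) * sin (π * t / 2)) t := by
  have h1 : HasDerivAt (fun t' : ℝ => π * t' / 2) (π / 2) t := by
    simpa using (((hasDerivAt_id t).const_mul π).div_const 2)
  have h2 := (((Real.hasDerivAt_cos (π * t / 2)).comp t h1).neg.add_const (cos (π * s / 2))).div_const 2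
  have heq : (fun x => ((-cos ∘ fun t' => π * t' / 2) x + cos (π * s / 2)) / 2)
      = fun t' => (cos (π * s / 2) - cos (π * t' / 2)) / 2 := by
    funext u; simp [Function.comp]; ring
  rw [heq] at h2
  refine h2.congr_deriv (Eq.symm ?_)
  ring

lemma ent_hasDerivAt (s t : ℝ) (h : |s| + |t| < 2) :
    HasDerivAt (fun t' => ent s t')
      (-(1/4) * (Real.log (sin (π * pA s t)) - Real.log (sin (π * pB s t)))) t := by
  have hpi := Real.pi_pos
  have hX := X_bounds h
  have h' : |t| + |s| < 2 := by linarith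
  set X := (cos (π * t / 2) - cos (π * s / 2)) / 2 with hXdef
  set sq := Real.sin (arccos X) with hsqdef
  have hsq_eq : sq = Real.sqrt (1 - X ^ 2) := Real.sin_arccos X
  have hQmem : arccos X ∈ Set.Ioo 0 π :=
    ⟨lt_of_le_of_lt (by positivity) (arccos_gt h), arccos_lt_pi' h⟩
  have hsq_pos : 0 < sq := Real.sin_pos_of_pos_of_lt_pi hQmem.1 hQmem.2
  -- derivative of arccos X(t')
  have hQ' : HasDerivAt (fun t' => arccos ((cos (π * t' / 2) - cos (π * s / 2)) / 2))
      (-(1 / sq) * (-(π / 4) * sin (π * t / 2))) t := by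
    have hda := (Real.hasDerivAt_arccos (ne_of_gt hX.1) (ne_of_lt hX.2)).comp t (X_hasDerivAt s t)
    have : HasDerivAt (fun t' => arccos ((cos (π * t' / 2) - cos (π * s / 2)) / 2))
        (-(1 / Real.sqrt (1 - X ^ 2)) * (-(π / 4) * sin (π * t / 2))) t := hda
    rwa [← hsq_eq] at this
  -- derivative of arccos Y(t')
  have hR' : HasDerivAt (fun t' => arccos ((cos (π * s / 2) - cos (π * t' / 2)) / 2))
      (-(1 / sq) * ((π / 4) * sin (π * t / 2))) t := by
    have hY1 : -1 < (cos (π * s / 2) - cos (π * t / 2)) / 2 := by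
      have := hX.2; rw [hXdef] at this; linarith
    have hY2 : (cos (π * s / 2) - cos (π * t / 2)) / 2 < 1 := by
      have := hX.1; rw [hXdef] at this; linarith
    have hda := (Real.hasDerivAt_arccos (ne_of_gt hY1) (ne_of_lt hY2)).comp t (Y_hasDerivAt s t)
    have hthis : HasDerivAt (fun t' => arccos ((cos (π * s / 2) - cos (π * t' / 2)) / 2))
        (-(1 / Real.sqrt (1 - ((cos (π * s / 2) - cos (π * t / 2)) / 2) ^ 2)) * ((π / 4) * sin (π * t / 2))) t := hda
    have hsqY : Real.sqrt (1 - ((cos (π * s / 2) - cos (π * t / 2)) / 2) ^ 2) = sq := by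
      rw [hsq_eq, hXdef]; ring_nf
    rw [hsqY] at hthis
    exact hthis
  -- memberships and sin positivity
  have hAmem := pA_mem h
  have hBmem := pB_mem h
  have hCmem : π * pC s t ∈ Set.Ioo 0 π := by rw [pC_eq]; exact pB_mem h'
  have hDmem : π * pD s t ∈ Set.Ioo 0 π := by rw [pD_eq]; exact pA_mem h'
  have hsA : 0 < sin (π * pA s t) := Real.sin_pos_of_pos_of_lt_pi hAmem.1 hAmem.2
  have hsB : 0 < sin (π * pB s t) := Real.sin_pos_of_pos_of_lt_pi hBmem.1 hBmem.2
  have hsC : 0 < sin (π * pC s t) := Real.sin_pos_of_pos_of_lt_pi hCmem.1 hCmem.2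
  have hsD : 0 < sin (π * pD s t) := Real.sin_pos_of_pos_of_lt_pi hDmem.1 hDmem.2
  -- derivatives of t' ↦ π * p• s t'
  have hA' : HasDerivAt (fun t' => π * pA s t')
      (π * (1/4 + 1/(2*π) * (-(1 / sq) * (-(π / 4) * sin (π * t / 2))))) t := by
    simp only [pA]
    exact (((hasDerivAt_id t).div_const 4).add (hQ'.const_mul (1/(2*π)))).const_mul π
  have hB' : HasDerivAt (fun t' => π * pB s t')
      (π * (-1/4 + 1/(2*π) * (-(1 / sq) * (-(π / 4) * sin (π * t / 2))))) t := by
    simp only [pB]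
    have := (((hasDerivAt_id t).neg.div_const 4).add (hQ'.const_mul (1/(2*π)))).const_mul π
    exact this
  have hC' : HasDerivAt (fun t' => π * pC s t')
      (π * (1/(2*π) * (-(1 / sq) * ((π / 4) * sin (π * t / 2))))) t := by
    simp only [pC]
    exact ((hR'.const_mul (1/(2*π))).const_add (-s/4)).const_mul π
  have hD' : HasDerivAt (fun t' => π * pD s t')
      (π * (1/(2*π) * (-(1 / sq) * ((π / 4) * sin (π * t / 2))))) t := by
    simp only [pD]
    exact ((hR'.const_mul (1/(2*π))).const_add (s/4)).const_mul π
  -- Lob compositions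
  have LA := (lob_hasDerivAt' hAmem.1 hAmem.2).comp t hA'
  have LB := (lob_hasDerivAt' hBmem.1 hBmem.2).comp t hB'
  have LC := (lob_hasDerivAt' hCmem.1 hCmem.2).comp t hC'
  have LD := (lob_hasDerivAt' hDmem.1 hDmem.2).comp t hD'
  have H := (((LA.add LB).add LC).add LD).const_mul (1/π)
  refine H.congr_deriv (Eq.symm ?_)
  -- now the value identity
  have sumeq : Real.log (sin (π * pA s t)) + Real.log (sin (π * pB s t)) =
      Real.log (sin (π * pC s t)) + Real.log (sin (π * pD s t)) := by
    have e1 := prod_eq h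
    have e2 := prod_eq h'
    have eC : π * pC s t = π * pB t s := by rw [pC_eq]
    have eD : π * pD s t = π * pA t s := by rw [pD_eq]
    rw [← Real.log_mul (ne_of_gt hsA) (ne_of_gt hsB), ← Real.log_mul (ne_of_gt hsC) (ne_of_gt hsD)]
    rw [e1, eC, eD]
    rw [show sin (π * pB t s) * sin (π * pA t s) = sin (π * pA t s) * sin (π * pB t s) by ring, e2]
    ring_nf
  have l2A : Real.log (2 * sin (π * pA s t)) = Real.log 2 + Real.log (sin (π * pA s t)) :=
    Real.log_mul (by norm_num) (ne_of_gt hsA)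
  have l2B : Real.log (2 * sin (π * pB s t)) = Real.log 2 + Real.log (sin (π * pB s t)) :=
    Real.log_mul (by norm_num) (ne_of_gt hsB)
  have l2C : Real.log (2 * sin (π * pC s t)) = Real.log 2 + Real.log (sin (π * pC s t)) :=
    Real.log_mul (by norm_num) (ne_of_gt hsC)
  have l2D : Real.log (2 * sin (π * pD s t)) = Real.log 2 + Real.log (sin (π * pD s t)) :=
    Real.log_mul (by norm_num) (ne_of_gt hsD)
  rw [l2A, l2B, l2C, l2D]
  have hpine := Real.pi_ne_zero
  have hsqne := ne_of_gt hsq_pos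
  field_simp
  linear_combination (sin (π * t / 2)) * sumeq

set_option maxHeartbeats 1000000 in
/-- The second partial derivative of `ent` with respect to `t`:  for
`|s| + |t| < 2`,
`ent_tt(s,t) = -π/(32 sin(π(p_a+p_b)) sin(πp_a) sin(πp_b)) ·
  (sin²(πs/2) + (cos(πs/2)+cos(πt/2))²/2)`,
and this quantity is strictly negative (the excluded points
`(±2,0), (0,±2)` do not satisfy `|s|+|t| < 2`). -/
theorem ent_tt_formula (s t : ℝ) (h : |s| + |t| < 2) :
    deriv (fun t' => deriv (fun t'' => ent s t'') t') t =
      -π / (32 * sin (π * (pA s t + pB s t)) * sin (π * pA s t) *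
          sin (π * pB s t)) *
        (sin (π * s / 2) ^ 2 +
          (cos (π * s / 2) + cos (π * t / 2)) ^ 2 / 2) ∧
    deriv (fun t' => deriv (fun t'' => ent s t'') t') t < 0 := by
  have hpi := Real.pi_pos
  have hpine := Real.pi_ne_zero
  have hX := X_bounds h
  have hcc := cs_ct_pos h
  set X := (cos (π * t / 2) - cos (π * s / 2)) / 2 with hXdef
  set sq := Real.sin (arccos X) with hsqdef
  have hsq_eq : sq = Real.sqrt (1 - X ^ 2) := Real.sin_arccos X
  have hQmem : arccos X ∈ Set.Ioo 0 π :=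
    ⟨lt_of_le_of_lt (by positivity) (arccos_gt h), arccos_lt_pi' h⟩
  have hsq_pos : 0 < sq := Real.sin_pos_of_pos_of_lt_pi hQmem.1 hQmem.2
  have hsqne := ne_of_gt hsq_pos
  have hAmem := pA_mem h
  have hBmem := pB_mem h
  have hsA : 0 < sin (π * pA s t) := Real.sin_pos_of_pos_of_lt_pi hAmem.1 hAmem.2
  have hsB : 0 < sin (π * pB s t) := Real.sin_pos_of_pos_of_lt_pi hBmem.1 hBmem.2
  -- derivative of arccos X(t')
  have hQ' : HasDerivAt (fun t' => arccos ((cos (π * t' / 2) - cos (π * s / 2)) / 2))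
      (-(1 / sq) * (-(π / 4) * sin (π * t / 2))) t := by
    have hda := (Real.hasDerivAt_arccos (ne_of_gt hX.1) (ne_of_lt hX.2)).comp t (X_hasDerivAt s t)
    have : HasDerivAt (fun t' => arccos ((cos (π * t' / 2) - cos (π * s / 2)) / 2))
        (-(1 / Real.sqrt (1 - X ^ 2)) * (-(π / 4) * sin (π * t / 2))) t := hda
    rwa [← hsq_eq] at this
  have hA' : HasDerivAt (fun t' => π * pA s t')
      (π * (1/4 + 1/(2*π) * (-(1 / sq) * (-(π / 4) * sin (π * t / 2))))) t := by
    simp only [pA]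
    exact (((hasDerivAt_id t).div_const 4).add (hQ'.const_mul (1/(2*π)))).const_mul π
  have hB' : HasDerivAt (fun t' => π * pB s t')
      (π * (-1/4 + 1/(2*π) * (-(1 / sq) * (-(π / 4) * sin (π * t / 2))))) t := by
    simp only [pB]
    have := (((hasDerivAt_id t).neg.div_const 4).add (hQ'.const_mul (1/(2*π)))).const_mul π
    exact this
  -- second derivative value
  have hlogA : HasDerivAt (fun t' => Real.log (sin (π * pA s t')))
      ((sin (π * pA s t))⁻¹ * (cos (π * pA s t) *
        (π * (1/4 + 1/(2*π) * (-(1 / sq) * (-(π / 4) * sin (π * t / 2))))))) t :=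
    by have := (Real.hasDerivAt_log (ne_of_gt hsA)).comp t ((Real.hasDerivAt_sin (π * pA s t)).comp t hA'); exact this
  have hlogB : HasDerivAt (fun t' => Real.log (sin (π * pB s t')))
      ((sin (π * pB s t))⁻¹ * (cos (π * pB s t) *
        (π * (-1/4 + 1/(2*π) * (-(1 / sq) * (-(π / 4) * sin (π * t / 2))))))) t :=
    by have := (Real.hasDerivAt_log (ne_of_gt hsB)).comp t ((Real.hasDerivAt_sin (π * pB s t)).comp t hB'); exact this
  have hF := (hlogA.sub hlogB).const_mul (-(1/4) : ℝ)
  -- eventual equality of derivatives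
  have hopen : {t' : ℝ | |s| + |t'| < 2} ∈ nhds t :=
    (isOpen_lt (continuous_const.add continuous_abs) continuous_const).mem_nhds h
  have hev : (fun t' => deriv (fun t'' => ent s t'') t') =ᶠ[nhds t]
      (fun t' => -(1/4) * (Real.log (sin (π * pA s t')) - Real.log (sin (π * pB s t')))) := by
    filter_upwards [hopen] with t' ht'
    exact (ent_hasDerivAt s t' ht').deriv
  have hd2 : deriv (fun t' => deriv (fun t'' => ent s t'') t') t =
      -(1/4) * ((sin (π * pA s t))⁻¹ * (cos (π * pA s t) *
        (π * (1/4 + 1/(2*π) * (-(1 / sq) * (-(π / 4) * sin (π * t / 2)))))) -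
        (sin (π * pB s t))⁻¹ * (cos (π * pB s t) *
        (π * (-1/4 + 1/(2*π) * (-(1 / sq) * (-(π / 4) * sin (π * t / 2))))))) := by
    rw [hev.deriv_eq]
    exact hF.deriv
  -- trig facts
  have hABsum : π * pA s t + π * pB s t = arccos X := by rw [pA_pi, pB_pi]; ring
  have hABdiff : π * pA s t - π * pB s t = π * t / 2 := by rw [pA_pi, pB_pi]; ring
  have f1 : sin (π * pA s t) * cos (π * pB s t) + cos (π * pA s t) * sin (π * pB s t) = sq := by
    rw [← Real.sin_add, hABsum]
  have f2 : sin (π * pA s t) * cos (π * pB s t) - cos (π * pA s t) * sin (π * pB s t)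
      = sin (π * t / 2) := by
    rw [← Real.sin_sub, hABdiff]
  have f3 : sq ^ 2 = 1 - ((cos (π * t / 2) - cos (π * s / 2)) / 2) ^ 2 := by
    rw [hsq_eq, ← hXdef]
    exact Real.sq_sqrt (by nlinarith [hX.1, hX.2])
  have f4 : sin (π * s / 2) ^ 2 = 1 - cos (π * s / 2) ^ 2 := by
    have := Real.sin_sq_add_cos_sq (π * s / 2); linarith
  have f5 : sin (π * t / 2) ^ 2 = 1 - cos (π * t / 2) ^ 2 := by
    have := Real.sin_sq_add_cos_sq (π * t / 2); linarith
  have hsinsum : sin (π * (pA s t + pB s t)) = sq := by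
    rw [show π * (pA s t + pB s t) = π * pA s t + π * pB s t by ring, hABsum]
  -- the value identity
  have key : -(1/4) * ((sin (π * pA s t))⁻¹ * (cos (π * pA s t) *
        (π * (1/4 + 1/(2*π) * (-(1 / sq) * (-(π / 4) * sin (π * t / 2)))))) -
        (sin (π * pB s t))⁻¹ * (cos (π * pB s t) *
        (π * (-1/4 + 1/(2*π) * (-(1 / sq) * (-(π / 4) * sin (π * t / 2))))))) =
      -π / (32 * sq * sin (π * pA s t) * sin (π * pB s t)) *
        (sin (π * s / 2) ^ 2 + (cos (π * s / 2) + cos (π * t / 2)) ^ 2 / 2) := by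
    field_simp
    linear_combination
      (32 * sin (π * t / 2)) * f2 -
      (64 * sq) * f1 -
      64 * f3 +
      32 * f4 +
      32 * f5
  rw [hd2, hsinsum, key]
  refine ⟨rfl, ?_⟩
  have hM : 0 < sin (π * s / 2) ^ 2 + (cos (π * s / 2) + cos (π * t / 2)) ^ 2 / 2 := by
    nlinarith [sq_nonneg (sin (π * s / 2))]
  have hD : 0 < 32 * sq * sin (π * pA s t) * sin (π * pB s t) := by positivity
  exact mul_neg_of_neg_of_pos (div_neg_of_neg_of_pos (by linarith) hD) hM
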